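/- For every d ≥ 3, the complete binary tree T^h on n = 2^{h+1} − 1 nodes admits a d-hitting family of schedules of size at most 2·n^{d−2}. -/

import Mathlib

/-- A schedule for a partial order is a linear extension: a linear order
relation `r` that extends the partial order. -/
def IsSchedule {α : Type*} [PartialOrder α] (r : α → α → Prop) : Prop :=
  IsLinearOrder α r ∧ ∀ x y : α, x ≤ y → r x y

/-- A schedule `r` hits the tuple `a` if it orders `a 0, a 1, ...` in this order. -/
def Hits {α : Type*} (r : α → α → Prop) {d : ℕ} (a : Fin d → α) : Prop :=
  ∀ i j : Fin d, i < j → r (a i) (a j)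

/-- A `d`-tuple of distinct events is admissible if no later component is
strictly below an earlier one. -/
def Admissible {α : Type*} [PartialOrder α] {d : ℕ} (a : Fin d → α) : Prop :=
  Function.Injective a ∧ ∀ i j : Fin d, i < j → ¬ (a j < a i)

/-- A family of schedules (indexed by `Fin k`) is `d`-hitting if every member is a
schedule and every admissible `d`-tuple is hit by some member. -/
def IsHittingFamily {α : Type*} [PartialOrder α] {k : ℕ} (F : Fin k → (α → α → Prop)) (d : ℕ) : Prop :=
  (∀ i, IsSchedule (F i)) ∧ ∀ a : Fin d → α, Admissible a → ∃ i, Hits (F i) a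

/-- The complete binary tree of height `h`: binary strings of length at most `h`. -/
def BTree (h : ℕ) := {l : List Bool // l.length ≤ h}

/-- The prefix partial order on the complete binary tree. -/
instance BTree.instPartialOrder {h : ℕ} : PartialOrder (BTree h) where
  le x y := x.1 <+: y.1
  le_refl x := List.prefix_refl x.1
  le_trans _ _ _ h1 h2 := List.IsPrefix.trans h1 h2
  le_antisymm _ _ h1 h2 :=
    Subtype.ext (h1.eq_of_length (le_antisymm h1.length_le h2.length_le))

/-- The left-to-right DFS order on binary strings: `x` comes before `y` iff `x` is a
prefix of `y`, or `x = u ++ 0 x'` and `y = u ++ 1 y'` (with `0 = false`, `1 = true`). -/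
def dfsL (x y : List Bool) : Prop :=
  x <+: y ∨ ∃ u x' y' : List Bool, x = u ++ false :: x' ∧ y = u ++ true :: y'

/-- The right-to-left DFS order on binary strings (mirror image of `dfsL`). -/
def dfsR (x y : List Bool) : Prop :=
  x <+: y ∨ ∃ u x' y' : List Bool, x = u ++ true :: x' ∧ y = u ++ false :: y'

/-! ### Auxiliary material for the construction -/

theorem prefix_le_lex {α : Type*} [LinearOrder α] :
    ∀ {x y : List α}, x <+: y → x ≤ y := by
  intro x
  induction x with
  | nil => intro y _; cases y with
    | nil => exact le_refl _
    | cons c t => exact le_of_lt (List.Lex.nil)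
  | cons c x' ih =>
    intro y hp
    obtain ⟨t, ht⟩ := hp
    cases y with
    | nil => simp at ht
    | cons b y' =>
      have hcb : c = b ∧ x' ++ t = y' := by simpa using ht
      obtain ⟨rfl, ht'⟩ := hcb
      have : x' ≤ y' := ih ⟨t, ht'⟩
      rcases lt_or_eq_of_le this with hlt | heq
      · exact le_of_lt (List.Lex.cons hlt)
      · subst heq; exact le_refl _

theorem lex_diverge (u x' y' : List Bool) : (u ++ false :: x') < (u ++ true :: y') :=
  List.Lex.append_left _ (List.Lex.rel (by decide)) u

theorem lex_lt_cases {x y : List Bool} (hlt : x < y) :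
    x <+: y ∨ ∃ u x' y', x = u ++ false :: x' ∧ y = u ++ true :: y' := by
  have hx : List.Lex (· < ·) x y := hlt
  induction hx with
  | nil => exact Or.inl (List.nil_prefix)
  | @rel a l₁ b l₂ hab =>
    have hab' : a = false ∧ b = true := by revert hab; cases a <;> cases b <;> decide
    exact Or.inr ⟨[], l₁, l₂, by simp [hab'.1], by simp [hab'.2]⟩
  | @cons a l₁ l₂ hml ih =>
    rcases ih hml with hp | ⟨u, x', y', hx1, hy1⟩
    · exact Or.inl (List.cons_prefix_cons.mpr ⟨rfl, hp⟩)
    · exact Or.inr ⟨a :: u, x', y', by simp [hx1], by simp [hy1]⟩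

namespace BTreeHit

/-- Either the identity or bitwise complement, giving the two DFS directions. -/
def keyL (s : Bool) (x : List Bool) : List Bool := if s then x.map not else x

theorem keyL_inj (s : Bool) : Function.Injective (keyL s) := by
  intro a b hab
  cases s
  · simpa [keyL] using hab
  · simp only [keyL, if_pos rfl] at hab
    exact List.map_injective_iff.mpr (fun a b hab => by simpa using hab) hab

theorem keyL_le_of_prefix (s : Bool) {x y : List Bool} (hp : x <+: y) :
    keyL s x ≤ keyL s y := by
  cases s
  · simpa [keyL] using prefix_le_lex hp
  · exact prefix_le_lex (by simpa [keyL] using hp.map not)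

variable {h m : ℕ}

/-- The index of the first chosen node that `x` lies below, or `m` if there is none. -/
noncomputable def idx (v : Fin m → BTree h) (x : BTree h) : ℕ :=
  sInf {i | i = m ∨ ∃ hi : i < m, x ≤ v ⟨i, hi⟩}

theorem idx_mem (v : Fin m → BTree h) (x : BTree h) :
    idx v x = m ∨ ∃ hi : idx v x < m, x ≤ v ⟨idx v x, hi⟩ := by
  have := Nat.sInf_mem (s := {i | i = m ∨ ∃ hi : i < m, x ≤ v ⟨i, hi⟩}) ⟨m, Or.inl rfl⟩
  exact this

theorem idx_le {v : Fin m → BTree h} {x : BTree h} {i : ℕ}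
    (hmem : i = m ∨ ∃ hi : i < m, x ≤ v ⟨i, hi⟩) : idx v x ≤ i :=
  Nat.sInf_le hmem

theorem idx_mono {v : Fin m → BTree h} {x y : BTree h} (hxy : x ≤ y) :
    idx v x ≤ idx v y := by
  rcases idx_mem v y with hm | ⟨hi, hle⟩
  · rw [hm]; exact idx_le (Or.inl rfl)
  · exact idx_le (Or.inr ⟨hi, le_trans hxy hle⟩)

/-- The schedule determined by direction `s` and chosen nodes `v`. -/
def R (s : Bool) (v : Fin m → BTree h) (x y : BTree h) : Prop :=
  (toLex (idx v x, keyL s x.1) : ℕ ×ₗ List Bool) ≤ toLex (idx v y, keyL s y.1)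

theorem R_schedule (s : Bool) (v : Fin m → BTree h) : IsSchedule (R s v) := by
  constructor
  · refine { refl := fun x => le_refl _,
             trans := fun x y z hxy hyz => le_trans hxy hyz,
             antisymm := ?_,
             total := fun x y => le_total _ _ }
    intro x y hxy hyx
    have heq := le_antisymm (hxy : R s v x y) hyx
    have h2 : keyL s x.1 = keyL s y.1 := congrArg (fun p => (ofLex p).2) heq
    exact Subtype.ext (keyL_inj s h2)
  · intro x y hxy
    show (toLex (idx v x, keyL s x.1) : ℕ ×ₗ List Bool) ≤ _
    rw [Prod.Lex.le_iff]
    rcases lt_or_eq_of_le (idx_mono (v := v) hxy) with hlt | heq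
    · exact Or.inl hlt
    · exact Or.inr ⟨heq, keyL_le_of_prefix s hxy⟩

/-! ### Cardinality of the tree -/

def treeEquiv : BTree h ≃ Σ i : Fin (h + 1), (Fin i → Bool) where
  toFun x := ⟨⟨x.1.length, Nat.lt_succ_of_le x.2⟩, fun j => x.1.get ⟨j.1, j.2⟩⟩
  invFun p := ⟨List.ofFn p.2, by simpa using Nat.le_of_lt_succ p.1.2⟩
  left_inv x := Subtype.ext (List.ofFn_get x.1)
  right_inv p := by
    rcases p with ⟨⟨i, hi⟩, f⟩
    have hlen : (List.ofFn f).length = i := by simp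
    refine Sigma.ext (by simp) ?_
    simp only []
    refine (Fin.heq_fun_iff (by simp)).mpr ?_
    intro j
    simp [List.get_ofFn]

noncomputable instance : Fintype (BTree h) := Fintype.ofEquiv _ treeEquiv.symm

theorem sum_two_pow (n : ℕ) : ∑ i ∈ Finset.range n, 2 ^ i = 2 ^ n - 1 := by
  induction n with
  | zero => simp
  | succ n ih =>
    rw [Finset.sum_range_succ, ih]
    have : 1 ≤ 2 ^ n := Nat.one_le_two_pow
    rw [pow_succ]
    omega

theorem card_btree : Fintype.card (BTree h) = 2 ^ (h + 1) - 1 := by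
  rw [Fintype.card_congr (treeEquiv (h := h))]
  rw [Fintype.card_sigma]
  have : ∀ i : Fin (h + 1), Fintype.card (Fin i → Bool) = 2 ^ (i : ℕ) := by
    intro i; simp [Fintype.card_fun]
  simp_rw [this]
  rw [Fin.sum_univ_eq_sum_range (fun i => 2 ^ i) (h + 1)]
  exact sum_two_pow (h + 1)

end BTreeHit

/-- for every `d ≥ 3`, the complete binary tree of height `h`,
which has `n = 2 ^ (h + 1) - 1` nodes, admits a `d`-hitting family of schedules of
size at most `2 · n ^ (d - 2)`. -/
theorem btree_hitting_family_le (h d : ℕ) (hd : 3 ≤ d) :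
    ∃ (k : ℕ) (F : Fin k → (BTree h → BTree h → Prop)),
      k ≤ 2 * (2 ^ (h + 1) - 1) ^ (d - 2) ∧ IsHittingFamily F d := by
  classical
  set m := d - 2 with hm
  set n := 2 ^ (h + 1) - 1 with hn
  have hcard : Fintype.card (Bool × (Fin m → BTree h)) = 2 * n ^ m := by
    rw [Fintype.card_prod, Fintype.card_bool, Fintype.card_fun, BTreeHit.card_btree,
      Fintype.card_fin]
  refine ⟨2 * n ^ m, ?_⟩
  have e : Fin (2 * n ^ m) ≃ Bool × (Fin m → BTree h) :=
    (Fintype.equivFinOfCardEq hcard).symm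
  refine ⟨fun i => BTreeHit.R (e i).1 (e i).2, le_refl _, ?_, ?_⟩
  · intro i; exact BTreeHit.R_schedule _ _
  · intro a ha
    obtain ⟨hinj, hadm⟩ := ha
    -- no later component is ≤ an earlier one
    have hno : ∀ i j : Fin d, i < j → ¬ a j ≤ a i := by
      intro i j hij hle
      rcases lt_or_eq_of_le hle with hlt | heq
      · exact hadm i j hij hlt
      · exact absurd (hinj heq) (Fin.ne_of_gt hij)
    set v : Fin m → BTree h := fun i => a ⟨i.1, by omega⟩ with hv
    -- idx of each component
    have hidx : ∀ i : Fin d, BTreeHit.idx v (a i) = min i.1 m := by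
      intro i
      apply le_antisymm
      · apply BTreeHit.idx_le
        rcases lt_or_ge i.1 m with hi | hi
        · refine Or.inr ?_
          rw [min_eq_left (le_of_lt hi)]
          exact ⟨hi, le_of_eq (congrArg a (Fin.ext rfl))⟩
        · exact Or.inl (min_eq_right hi)
      · rcases BTreeHit.idx_mem v (a i) with hmem | ⟨hlt, hle⟩
        · rw [hmem]; exact min_le_right _ _
        · set j := BTreeHit.idx v (a i) with hj
          by_contra hcon
          push_neg at hcon
          have hji : j < i.1 := lt_of_lt_of_le hcon (min_le_left _ _)
          have : a i ≤ a ⟨j, by omega⟩ := hle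
          exact hno ⟨j, by omega⟩ i (by exact hji) this
    -- the last two components
    have hd2 : d - 2 < d := by omega
    have hd1 : d - 1 < d := by omega
    set x : BTree h := a ⟨d - 2, hd2⟩ with hx
    set y : BTree h := a ⟨d - 1, hd1⟩ with hy
    have hlast : ∃ s : Bool, BTreeHit.keyL s x.1 ≤ BTreeHit.keyL s y.1 := by
      rcases le_or_gt x.1 y.1 with hle | hlt
      · exact ⟨false, by simpa [BTreeHit.keyL] using hle⟩
      · rcases lex_lt_cases hlt with hp | ⟨u, y', x', hy1, hx1⟩
        · -- y.1 is a prefix of x.1, so y < x in the tree: contradiction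
          exfalso
          have hxy : x ≠ y := by
            intro hcon
            have := hinj hcon
            simp only [Fin.mk.injEq] at this
            omega
          have : y < x := lt_of_le_of_ne hp (fun hcon => hxy hcon.symm)
          exact hadm ⟨d - 2, hd2⟩ ⟨d - 1, hd1⟩ (by simp [Fin.lt_def]; omega) this
        · -- they diverge: y goes through false, x through true; mirror works
          refine ⟨true, le_of_lt ?_⟩
          simp only [BTreeHit.keyL, if_pos rfl, hy1, hx1, List.map_append, List.map_cons]
          simpa using lex_diverge (u.map not) (x'.map not) (y'.map not)
    obtain ⟨s, hs⟩ := hlast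
    refine ⟨e.symm (s, v), ?_⟩
    intro i j hij
    have he : e (e.symm (s, v)) = (s, v) := Equiv.apply_symm_apply e _
    rw [he]
    show (toLex (BTreeHit.idx v (a i), BTreeHit.keyL s (a i).1) : ℕ ×ₗ List Bool) ≤ _
    rw [Prod.Lex.le_iff]
    rw [hidx i, hidx j]
    simp only [ofLex_toLex]
    have hij' : i.1 < j.1 := hij
    rcases lt_or_ge i.1 m with him | him
    · -- idx strictly increases or stays below
      rcases lt_or_ge j.1 m with hjm | hjm
      · exact Or.inl (by simp only [min_eq_left (le_of_lt him), min_eq_left (le_of_lt hjm)]; omega)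
      · exact Or.inl (by rw [min_eq_left (le_of_lt him), min_eq_right hjm]; omega)
    · -- i.1 ≥ m forces i = d-2, j = d-1
      have hi2 : i.1 = d - 2 := by omega
      have hj2 : j.1 = d - 1 := by omega
      have hieq : i = ⟨d - 2, hd2⟩ := Fin.ext hi2
      have hjeq : j = ⟨d - 1, hd1⟩ := Fin.ext hj2
      refine Or.inr ⟨by omega, ?_⟩
      rw [hieq, hjeq]
      exact hs
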